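/- Let K be a field and A a K-algebra with dim_K A = n. Let X ⊆ A* and Y, U ⊆ A be K-subspaces with dim X = r, dim Y = s, dim U = u, and suppose the multiplication map Y ⊗_K U → A, y ⊗ u ↦ y·u, is injective. Then the K-subspace of Hom_K(X, A*) ⊕ Hom_K(Y, A) consisting of all pairs (f, g) such that f(x)(y·z) + x(g(y)·z) = 0 for all x ∈ X, y ∈ Y, z ∈ U has dimension rn + sn − rsu. -/

import Mathlib

set_option maxHeartbeats 1000000
set_option synthInstance.maxHeartbeats 200000

open TensorProduct

section Aux
variable (K : Type*) [Field K] (A : Type*) [Ring A] [Algebra K A]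
  (X : Submodule K (Module.Dual K A)) (Y U : Submodule K A)

/-- auxiliary map `(f, g) ↦ (x ↦ (y⊗z ↦ f x (y*z) + x (g y * z)))`. -/
noncomputable def stmt10Phi :
    ((↥X →ₗ[K] (A →ₗ[K] K)) × (↥Y →ₗ[K] A)) →ₗ[K]
      (↥X →ₗ[K] (↥Y ⊗[K] ↥U →ₗ[K] K)) where
  toFun fg :=
    (TensorProduct.lift (((LinearMap.mul K A).comp Y.subtype).compl₂ U.subtype)).dualMap ∘ₗ fg.1 +
    (TensorProduct.lift (((LinearMap.mul K A).comp fg.2).compl₂ U.subtype)).dualMap ∘ₗ X.subtype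
  map_add' fg fg' := by
    ext x y z
    simp [add_mul, mul_add]
    ring
  map_smul' c fg := by
    ext x y z
    simp [smul_mul_assoc, mul_add]

theorem stmt10Phi_apply (fg : (↥X →ₗ[K] (A →ₗ[K] K)) × (↥Y →ₗ[K] A)) (x : X) (y : Y) (z : U) :
    stmt10Phi K A X Y U fg x (y ⊗ₜ z) = fg.1 x ((y : A) * (z : A)) + (x : Module.Dual K A) (fg.2 y * (z : A)) := by
  simp [stmt10Phi]

end Aux

theorem stmt_10 (K : Type*) [Field K] (A : Type*) [Ring A] [Algebra K A]
    [FiniteDimensional K A] (n r s u : ℕ) (hn : Module.finrank K A = n)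
    (X : Submodule K (Module.Dual K A)) (Y U : Submodule K A)
    (hX : Module.finrank K ↥X = r) (hY : Module.finrank K ↥Y = s)
    (hU : Module.finrank K ↥U = u)
    (hinj : Function.Injective
      (TensorProduct.lift (((LinearMap.mul K A).comp Y.subtype).compl₂ U.subtype))) :
    Module.finrank K
      ↥(⨅ (x : ↥X) (y : ↥Y) (z : ↥U), LinearMap.ker
        ((LinearMap.applyₗ ((y : A) * (z : A))) ∘ₗ (LinearMap.applyₗ x) ∘ₗ
            (LinearMap.fst K (↥X →ₗ[K] (A →ₗ[K] K)) (↥Y →ₗ[K] A)) +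
          ((x : Module.Dual K A) ∘ₗ LinearMap.mulRight K (z : A)) ∘ₗ
            (LinearMap.applyₗ y) ∘ₗ
            (LinearMap.snd K (↥X →ₗ[K] (A →ₗ[K] K)) (↥Y →ₗ[K] A)))) =
      r * n + s * n - r * s * u := by
  haveI := Module.Free.of_divisionRing K ↥X
  haveI := Module.Free.of_divisionRing K ↥Y
  haveI := Module.Free.of_divisionRing K ↥U
  haveI := Module.Free.of_divisionRing K A
  haveI := Module.Free.of_divisionRing K (↥Y ⊗[K] ↥U)
  haveI := Module.Free.of_divisionRing K (A →ₗ[K] K)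
  haveI := Module.Free.of_divisionRing K (↥Y ⊗[K] ↥U →ₗ[K] K)
  haveI : Module.Finite K (A →ₗ[K] K) := Module.Finite.linearMap K K A K
  haveI : Module.Finite K (↥X →ₗ[K] A →ₗ[K] K) := Module.Finite.linearMap K K ↥X (A →ₗ[K] K)
  haveI : Module.Finite K (↥Y →ₗ[K] A) := Module.Finite.linearMap K K ↥Y A
  haveI : FiniteDimensional K ((↥X →ₗ[K] A →ₗ[K] K) × (↥Y →ₗ[K] A)) := Module.Finite.prod
  haveI : Module.Finite K (↥Y ⊗[K] ↥U) := Module.Finite.tensorProduct K ↥Y ↥U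
  haveI : Module.Finite K (↥Y ⊗[K] ↥U →ₗ[K] K) :=
    Module.Finite.linearMap K K (↥Y ⊗[K] ↥U) K
  haveI : Module.Finite K (↥X →ₗ[K] ↥Y ⊗[K] ↥U →ₗ[K] K) :=
    Module.Finite.linearMap K K ↥X (↥Y ⊗[K] ↥U →ₗ[K] K)
  set Φ := stmt10Phi K A X Y U with hΦ
  have hker : (⨅ (x : ↥X) (y : ↥Y) (z : ↥U), LinearMap.ker
        ((LinearMap.applyₗ ((y : A) * (z : A))) ∘ₗ (LinearMap.applyₗ x) ∘ₗ
            (LinearMap.fst K (↥X →ₗ[K] (A →ₗ[K] K)) (↥Y →ₗ[K] A)) +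
          ((x : Module.Dual K A) ∘ₗ LinearMap.mulRight K (z : A)) ∘ₗ
            (LinearMap.applyₗ y) ∘ₗ
            (LinearMap.snd K (↥X →ₗ[K] (A →ₗ[K] K)) (↥Y →ₗ[K] A)))) = LinearMap.ker Φ := by
    ext fg
    simp only [Submodule.mem_iInf, LinearMap.mem_ker]
    constructor
    · intro h
      ext x y z
      simp only [AlgebraTensorModule.curry_apply, TensorProduct.curry_apply,
        LinearMap.coe_restrictScalars, hΦ, stmt10Phi_apply, LinearMap.zero_apply]
      simpa using h x y z
    · intro h x y z
      have := LinearMap.congr_fun (LinearMap.congr_fun h x) ((y : ↥Y) ⊗ₜ[K] (z : ↥U))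
      rw [stmt10Phi_apply] at this
      simpa using this
  have hsurj : Function.Surjective Φ := by
    set m := TensorProduct.lift (((LinearMap.mul K A).comp Y.subtype).compl₂ U.subtype)
    have hm : Function.Surjective m.dualMap := by
      exact LinearMap.dualMap_surjective_of_injective (K := K) (V₁ := Y ⊗[K] U) (V₂ := A) hinj
    obtain ⟨σ, hσ⟩ := m.dualMap.exists_rightInverse_of_surjective (LinearMap.range_eq_top.2 hm)
    intro h
    refine ⟨(σ ∘ₗ h, 0), ?_⟩
    ext x y z
    have hmz : m ((y : ↥Y) ⊗ₜ[K] (z : ↥U)) = (y : A) * (z : A) := by simp [m]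
    have := LinearMap.congr_fun (LinearMap.congr_fun hσ (h x)) ((y : ↥Y) ⊗ₜ[K] (z : ↥U))
    simp only [LinearMap.coe_comp, Function.comp_apply, LinearMap.dualMap_apply,
      LinearMap.id_coe, id_eq, hmz] at this
    simp only [AlgebraTensorModule.curry_apply, TensorProduct.curry_apply,
      LinearMap.coe_restrictScalars, hΦ, stmt10Phi_apply]
    simpa using this
  have h1 := LinearMap.finrank_range_add_finrank_ker (K := K)
      (V := (↥X →ₗ[K] (A →ₗ[K] K)) × (↥Y →ₗ[K] A)) (V₂ := ↥X →ₗ[K] (↥Y ⊗[K] ↥U →ₗ[K] K)) Φ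
  rw [LinearMap.range_eq_top.2 hsurj, finrank_top] at h1
  have e1 := Module.finrank_linearMap (R := K) (S := K) (M := ↥X)
    (N := (↥Y ⊗[K] ↥U →ₗ[K] K))
  have e2 := Module.finrank_linearMap (R := K) (S := K) (M := ↥Y ⊗[K] ↥U) (N := K)
  have e3 := Module.finrank_linearMap (R := K) (S := K) (M := ↥X) (N := (A →ₗ[K] K))
  have e4 := Module.finrank_linearMap (R := K) (S := K) (M := A) (N := K)
  have e5 := Module.finrank_linearMap (R := K) (S := K) (M := ↥Y) (N := A)
  have e6 := Module.finrank_tensorProduct (R := K) (S := K) (M := ↥Y) (M' := ↥U)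
  haveI := Module.Free.of_divisionRing K (↥X →ₗ[K] A →ₗ[K] K)
  haveI := Module.Free.of_divisionRing K (↥Y →ₗ[K] A)
  have e7 := Module.finrank_prod (R := K) (M := (↥X →ₗ[K] (A →ₗ[K] K))) (M' := (↥Y →ₗ[K] A))
  have hT : Module.finrank K (↥X →ₗ[K] (↥Y ⊗[K] ↥U →ₗ[K] K)) = r * (s * u) := by
    rw [e1, e2, e6, Module.finrank_self, hX, hY, hU, mul_one]
  have hW : Module.finrank K ((↥X →ₗ[K] (A →ₗ[K] K)) × (↥Y →ₗ[K] A)) = r * n + s * n := by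
    rw [e7, e3, e4, e5, Module.finrank_self, hX, hY, hn, mul_one]
  rw [hT, hW] at h1
  rw [hker, mul_assoc]
  omega
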